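/- Let X ⊆ ℝⁿ be a nonempty closed convex set, f₁ : ℝⁿ → ℝ convex, f₂ : ℝⁿ → ℝ convex and differentiable, F = f₁ + f₂, and α > 0. Then a point x̄ ∈ X minimizes F over X if and only if x̄ = prox_{α f₁}( x̄ − α∇f₂(x̄) ), i.e. the minimizers of F over X are exactly the fixed points of the proximal splitting map. -/

import Mathlib

set_option linter.unusedSectionVars false
set_option linter.unusedVariables false
open Set Filter
open scoped RealInnerProductSpace Topology

section aux
variable {E : Type*} [NormedAddCommGroup E] [InnerProductSpace ℝ E] [CompleteSpace E]

lemma slope_tendsto (φ : E → ℝ) (x gx d : E) (hg : HasGradientAt φ gx x) :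
    Tendsto (fun t : ℝ => (φ (x + t • d) - φ x) / t) (𝓝[>] 0) (𝓝 ⟪gx, d⟫) := by
  have hc : HasDerivAt (fun t : ℝ => x + t • d) d 0 := by
    simpa using ((hasDerivAt_id (0:ℝ)).smul_const d).const_add x
  have h : HasDerivAt (fun t : ℝ => φ (x + t • d)) ⟪gx, d⟫ 0 := by
    have := (by simpa using hg.hasFDerivAt : HasFDerivAt φ (InnerProductSpace.toDual ℝ E gx) (x + (0:ℝ) • d)).comp_hasDerivAt 0 hc
    simpa [InnerProductSpace.toDual_apply_apply, Function.comp_def] using this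
  have := (hasDerivAt_iff_tendsto_slope.1 h).mono_left
    (nhdsWithin_mono 0 (fun t ht => ne_of_gt ht : Ioi (0:ℝ) ⊆ {(0:ℝ)}ᶜ))
  refine this.congr' ?_
  filter_upwards [self_mem_nhdsWithin] with t ht
  simp [slope_def_field, div_eq_inv_mul]

lemma slope_le (φ : E → ℝ) (hφ : ConvexOn ℝ univ φ) (x y : E) {t : ℝ}
    (ht : t ∈ Ioc (0:ℝ) 1) :
    (φ (x + t • (y - x)) - φ x) / t ≤ φ y - φ x := by
  have h := hφ.2 (mem_univ x) (mem_univ y) (by linarith [ht.2] : (0:ℝ) ≤ 1 - t)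
    (le_of_lt ht.1) (by ring)
  have hx : (1 - t) • x + t • y = x + t • (y - x) := by
    simp [smul_sub, sub_smul]; abel
  rw [hx] at h
  rw [div_le_iff₀ ht.1]
  simp only [smul_eq_mul] at h
  nlinarith [ht.1]

lemma grad_ineq (φ : E → ℝ) (hφ : ConvexOn ℝ univ φ) (x gx : E)
    (hg : HasGradientAt φ gx x) (y : E) : ⟪gx, y - x⟫ ≤ φ y - φ x := by
  refine le_of_tendsto (slope_tendsto φ x gx (y - x) hg) ?_
  filter_upwards [Ioc_mem_nhdsGT_of_mem (Set.mem_Ico.2 ⟨le_refl 0, one_pos⟩)] with t ht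
  exact slope_le φ hφ x y ht

end aux

lemma tendsto_const_add_mul (c₁ c₂ : ℝ) :
    Tendsto (fun t : ℝ => c₁ + t * c₂) (𝓝[>] 0) (𝓝 c₁) := by
  have : Tendsto (fun t : ℝ => c₁ + t * c₂) (𝓝 0) (𝓝 (c₁ + 0 * c₂)) :=
    (continuous_const.add (continuous_id.mul continuous_const)).tendsto 0
  simpa using this.mono_left nhdsWithin_le_nhds


/-- `p` is the proximal point `prox_φ(x, X)`: the minimizer over `y ∈ X` of
`φ(y) + (1/2)‖y − x‖²`. -/
def IsProx {E : Type*} [NormedAddCommGroup E] [InnerProductSpace ℝ E]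
    (φ : E → ℝ) (X : Set E) (x p : E) : Prop :=
  p ∈ X ∧ ∀ y ∈ X, φ p + (1 / 2) * ‖p - x‖ ^ 2 ≤ φ y + (1 / 2) * ‖y - x‖ ^ 2

/-- A point `x̄ ∈ X` minimizes `F = f₁ + f₂` over `X` if and only if it is a fixed
point of the proximal splitting map, i.e. `x̄ = prox_{αf₁}(x̄ − α∇f₂(x̄))`. -/
theorem minimizer_iff_prox_fixed_point {n : ℕ}
    (X : Set (EuclideanSpace ℝ (Fin n)))
    (hXne : X.Nonempty) (hXcl : IsClosed X) (hXcv : Convex ℝ X)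
    (f₁ f₂ : EuclideanSpace ℝ (Fin n) → ℝ)
    (hf₁ : ConvexOn ℝ univ f₁) (hf₂ : ConvexOn ℝ univ f₂)
    (g : EuclideanSpace ℝ (Fin n) → EuclideanSpace ℝ (Fin n))
    (hg : ∀ z, HasGradientAt f₂ (g z) z)
    (F : EuclideanSpace ℝ (Fin n) → ℝ) (hF : ∀ z, F z = f₁ z + f₂ z)
    (α : ℝ) (hα : 0 < α)
    (xbar : EuclideanSpace ℝ (Fin n)) (hxbar : xbar ∈ X) :
    (∀ y ∈ X, F xbar ≤ F y) ↔
      IsProx (fun y => α * f₁ y) X (xbar - α • g xbar) xbar := by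
  set G := g xbar with hG
  -- membership of segment points
  have hseg : ∀ y ∈ X, ∀ t ∈ Ioc (0:ℝ) 1, xbar + t • (y - xbar) ∈ X := by
    intro y hy t ht
    have h := hXcv hxbar hy (by linarith [ht.2] : (0:ℝ) ≤ 1 - t) (le_of_lt ht.1) (by ring)
    have hx : (1 - t) • xbar + t • y = xbar + t • (y - xbar) := by
      simp [smul_sub, sub_smul]; abel
    rwa [hx] at h
  -- norm expansions
  have e1 : ‖xbar - (xbar - α • G)‖ ^ 2 = α ^ 2 * ‖G‖ ^ 2 := by
    have : xbar - (xbar - α • G) = α • G := by abel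
    rw [this, norm_smul]
    simp [mul_pow, sq_abs]
  have e2 : ∀ y : EuclideanSpace ℝ (Fin n),
      ‖y - (xbar - α • G)‖ ^ 2
        = ‖y - xbar‖ ^ 2 + 2 * (α * ⟪y - xbar, G⟫) + α ^ 2 * ‖G‖ ^ 2 := by
    intro y
    have h0 : y - (xbar - α • G) = (y - xbar) + α • G := by abel
    rw [h0, norm_add_sq_real, real_inner_smul_right, norm_smul]
    simp [mul_pow, sq_abs]
  constructor
  · -- minimizer → prox fixed point
    intro hmin
    -- variational inequality
    have hVI : ∀ y ∈ X, 0 ≤ f₁ y - f₁ xbar + ⟪G, y - xbar⟫ := by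
      intro y hy
      have hten := slope_tendsto f₂ xbar G (y - xbar) (hg xbar)
      have : -(f₁ y - f₁ xbar) ≤ ⟪G, y - xbar⟫ := by
        refine ge_of_tendsto hten ?_
        filter_upwards [Ioc_mem_nhdsGT_of_mem (Set.mem_Ico.2 ⟨le_refl 0, one_pos⟩)] with t ht
        have hmem := hseg y hy t ht
        have hmin' := hmin _ hmem
        rw [hF, hF] at hmin'
        have hs1 := slope_le f₁ hf₁ xbar y ht
        have hpos : (0:ℝ) < t := ht.1
        rw [div_le_iff₀ hpos] at hs1
        rw [le_div_iff₀ hpos]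
        nlinarith
      linarith
    refine ⟨hxbar, fun y hy => ?_⟩
    simp only []
    rw [e1, e2 y]
    have h1 : 0 ≤ f₁ y - f₁ xbar + ⟪G, y - xbar⟫ := hVI y hy
    have h2 : (0:ℝ) ≤ ‖y - xbar‖ ^ 2 := sq_nonneg _
    have h3 : ⟪y - xbar, G⟫ = ⟪G, y - xbar⟫ := real_inner_comm _ _
    nlinarith
  · -- prox fixed point → minimizer
    rintro ⟨-, hp⟩ y hy
    -- variational inequality from prox
    have hVI : 0 ≤ f₁ y - f₁ xbar + ⟪G, y - xbar⟫ := by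
      have key : ∀ t ∈ Ioc (0:ℝ) 1,
          0 ≤ α * (f₁ y - f₁ xbar + ⟪G, y - xbar⟫) + t * ((1/2) * ‖y - xbar‖ ^ 2) := by
        intro t ht
        have hmem := hseg y hy t ht
        have h := hp _ hmem
        simp only [] at h
        rw [e1, e2 _] at h
        have hxt : xbar + t • (y - xbar) - xbar = t • (y - xbar) := by abel
        rw [hxt] at h
        have hn : ‖t • (y - xbar)‖ ^ 2 = t ^ 2 * ‖y - xbar‖ ^ 2 := by
          rw [norm_smul]; simp [mul_pow, sq_abs]
        have hi : ⟪t • (y - xbar), G⟫ = t * ⟪y - xbar, G⟫ := real_inner_smul_left _ _ _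
        rw [hn, hi] at h
        have hcv := slope_le f₁ hf₁ xbar y ht
        have hpos : (0:ℝ) < t := ht.1
        rw [div_le_iff₀ hpos] at hcv
        have h3 : ⟪y - xbar, G⟫ = ⟪G, y - xbar⟫ := real_inner_comm _ _
        rw [h3] at h
        have := mul_le_mul_of_nonneg_left hcv (le_of_lt hα)
        nlinarith
      have hlim := tendsto_const_add_mul (α * (f₁ y - f₁ xbar + ⟪G, y - xbar⟫))
        ((1/2) * ‖y - xbar‖ ^ 2)
      have : 0 ≤ α * (f₁ y - f₁ xbar + ⟪G, y - xbar⟫) := by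
        refine ge_of_tendsto hlim ?_
        filter_upwards [Ioc_mem_nhdsGT_of_mem (Set.mem_Ico.2 ⟨le_refl 0, one_pos⟩)] with t ht
        exact key t ht
      nlinarith
    have hgrad := grad_ineq f₂ hf₂ xbar G (hg xbar) y
    rw [hF, hF]
    linarith
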